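/- Let n ≥ 1 and let A = J(λ,n) ⊕ J(λ⁻¹,n) be the block-diagonal matrix in GL(2n,D), where either D = ℝ or D = ℂ and λ ∈ D \ {0, 1, -1}, or D = ℍ and λ is a nonzero complex number with nonnegative imaginary part and |λ| ≠ 1, viewed as a quaternion. Then A is strongly reversible in GL(2n,D); that is, there exists an invertible 2n×2n matrix g over D with g² = I and g·A·g⁻¹ = A⁻¹. -/

import Mathlib

open Matrix

set_option maxHeartbeats 1000000

/-- The Jordan block `J(λ, m)`: an `m × m` matrix with `λ` on the diagonal,
`1` on the superdiagonal, and `0` elsewhere. -/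
def jordanBlock {D : Type*} [Ring D] (lam : D) (m : ℕ) : Matrix (Fin m) (Fin m) D :=
  Matrix.of fun i j => if i = j then lam else if (i : ℕ) + 1 = (j : ℕ) then 1 else 0

/-- The realification embedding `Ψ : M(n,ℂ) → M(2n,ℝ)`, replacing each complex entry
`z` by the 2×2 real block `((Re z, Im z), (-Im z, Re z))`. -/
def Psi {n : ℕ} (A : Matrix (Fin n) (Fin n) ℂ) :
    Matrix (Fin n × Fin 2) (Fin n × Fin 2) ℝ :=
  Matrix.of fun p q =>
    !![(A p.1 q.1).re, (A p.1 q.1).im; -(A p.1 q.1).im, (A p.1 q.1).re] p.2 q.2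

/-- The standard embedding of `ℂ` into the real quaternions,
sending `a + b i` to `a + b 𝐢`. -/
def toQuat (z : ℂ) : Quaternion ℝ := ⟨z.re, z.im, 0, 0⟩

/-- `X ∈ gl(n,D)` is `Ad_{GL(n,D)}`-real: there is an invertible matrix `g`
with `g X g⁻¹ = -X`. -/
def AdjReal {D : Type*} [Ring D] {ι : Type*} [Fintype ι] [DecidableEq ι]
    (X : Matrix ι ι D) : Prop :=
  ∃ g : (Matrix ι ι D)ˣ, g.val * X * (g⁻¹).val = -X

/-- `X ∈ gl(n,D)` is strongly `Ad_{GL(n,D)}`-real: there is an invertible matrix `g`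
with `g² = I` and `g X g⁻¹ = -X`. -/
def StronglyAdjReal {D : Type*} [Ring D] {ι : Type*} [Fintype ι] [DecidableEq ι]
    (X : Matrix ι ι D) : Prop :=
  ∃ g : (Matrix ι ι D)ˣ, g * g = 1 ∧ g.val * X * (g⁻¹).val = -X

/-- `A` is reversible in `GL(n,D)`: `A` is invertible and there is an invertible
matrix `g` with `g A g⁻¹ = A⁻¹`. -/
def Reversible {D : Type*} [Ring D] {ι : Type*} [Fintype ι] [DecidableEq ι]
    (A : Matrix ι ι D) : Prop :=
  ∃ a : (Matrix ι ι D)ˣ, a.val = A ∧ ∃ g : (Matrix ι ι D)ˣ, g * a * g⁻¹ = a⁻¹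

/-- `A` is strongly reversible in `GL(n,D)`: `A` is invertible and there is an
invertible matrix `g` with `g² = I` and `g A g⁻¹ = A⁻¹`. -/
def StronglyReversible {D : Type*} [Ring D] {ι : Type*} [Fintype ι] [DecidableEq ι]
    (A : Matrix ι ι D) : Prop :=
  ∃ a : (Matrix ι ι D)ˣ, a.val = A ∧ ∃ g : (Matrix ι ι D)ˣ, g * g = 1 ∧ g * a * g⁻¹ = a⁻¹


section Aux
variable {F : Type*} [Field F] {n : ℕ}

/-- The nilpotent shift matrix. -/
def Nmat (F : Type*) [Field F] (n : ℕ) : Matrix (Fin n) (Fin n) F :=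
  Matrix.of fun i j => if (i : ℕ) + 1 = (j : ℕ) then 1 else 0

lemma jordan_eq (lam : F) (n : ℕ) :
    jordanBlock lam n = lam • (1 : Matrix (Fin n) (Fin n) F) + Nmat F n := by
  ext i j
  simp only [jordanBlock, Nmat, Matrix.of_apply, Matrix.add_apply, Matrix.smul_apply,
    Matrix.one_apply, smul_eq_mul]
  by_cases h : i = j
  · subst h; simp
  · simp [h]

/-- Entries of the conjugating matrix. -/
def Hf (lam : F) (i j : ℕ) : F := (-1) ^ j * lam ^ (i + j) * (j.choose i)

/-- The conjugating matrix `H` with `J(λ) H J(λ⁻¹) = H`. -/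
def Hmat (lam : F) (n : ℕ) : Matrix (Fin n) (Fin n) F :=
  Matrix.of fun i j => Hf lam i j

lemma Nmul (M : Matrix (Fin n) (Fin n) F) (i j : Fin n) :
    (Nmat F n * M) i j = if h : (i : ℕ) + 1 < n then M ⟨(i : ℕ) + 1, h⟩ j else 0 := by
  rw [Matrix.mul_apply]
  split_ifs with h
  · rw [Finset.sum_eq_single (⟨(i : ℕ) + 1, h⟩ : Fin n)]
    · simp [Nmat]
    · intro k _ hk
      simp only [Nmat, Matrix.of_apply]
      rw [if_neg, zero_mul]
      intro he; exact hk (Fin.ext he.symm)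
    · intro hk; exact absurd (Finset.mem_univ _) hk
  · apply Finset.sum_eq_zero
    intro k _
    simp only [Nmat, Matrix.of_apply]
    rw [if_neg, zero_mul]
    intro he; exact h (he ▸ k.isLt)

lemma mulN (M : Matrix (Fin n) (Fin n) F) (i j : Fin n) :
    (M * Nmat F n) i j = if (j : ℕ) = 0 then 0 else
      M i ⟨(j : ℕ) - 1, Nat.lt_of_le_of_lt (Nat.pred_le _) j.isLt⟩ := by
  rw [Matrix.mul_apply]
  split_ifs with h
  · apply Finset.sum_eq_zero
    intro k _
    simp only [Nmat, Matrix.of_apply]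
    rw [if_neg, mul_zero]
    omega
  · rw [Finset.sum_eq_single (⟨(j : ℕ) - 1, Nat.lt_of_le_of_lt (Nat.pred_le _) j.isLt⟩ : Fin n)]
    · simp only [Nmat, Matrix.of_apply, Fin.val_mk]
      rw [if_pos (by omega), mul_one]
    · intro k _ hk
      simp only [Nmat, Matrix.of_apply]
      rw [if_neg, mul_zero]
      intro he
      exact hk (Fin.ext (by simp only [Fin.val_mk]; omega))
    · intro hk; exact absurd (Finset.mem_univ _) hk

lemma zerokey (lam : F) (hl : lam ≠ 0) (n : ℕ) :
    lam • (Hmat lam n * Nmat F n) + lam⁻¹ • (Nmat F n * Hmat lam n)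
      + (Nmat F n * Hmat lam n) * Nmat F n = 0 := by
  ext i j
  simp only [Matrix.add_apply, Matrix.smul_apply, Matrix.zero_apply, smul_eq_mul]
  rw [mulN, mulN, Nmul]
  by_cases hj : (j : ℕ) = 0
  · rw [if_pos hj, if_pos hj, mul_zero, add_zero, zero_add]
    split_ifs with hi
    · simp [Hmat, Hf, hj]
    · simp
  · rw [if_neg hj, if_neg hj]
    rw [Nmul]
    obtain ⟨j', hj'⟩ : ∃ j', (j : ℕ) = j' + 1 :=
      ⟨(j : ℕ) - 1, (Nat.succ_pred_eq_of_pos (Nat.pos_of_ne_zero hj)).symm⟩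
    by_cases hi : (i : ℕ) + 1 < n
    · rw [dif_pos hi, dif_pos hi]
      simp only [Hmat, Matrix.of_apply, Fin.val_mk, Hf, hj']
      rw [Nat.add_sub_cancel, Nat.choose_succ_succ]
      push_cast
      field_simp
      ring
    · rw [dif_neg hi, dif_neg hi]
      have hij : (j : ℕ) - 1 < (i : ℕ) := by omega
      simp [Hmat, Hf, Nat.choose_eq_zero_of_lt hij]

lemma key (lam : F) (hl : lam ≠ 0) (n : ℕ) :
    jordanBlock lam n * Hmat lam n * jordanBlock lam⁻¹ n = Hmat lam n := by
  rw [jordan_eq lam, jordan_eq lam⁻¹]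
  have h0 := zerokey lam hl n
  have expand : (lam • (1 : Matrix (Fin n) (Fin n) F) + Nmat F n) * Hmat lam n *
      (lam⁻¹ • (1 : Matrix (Fin n) (Fin n) F) + Nmat F n)
      = Hmat lam n + (lam • (Hmat lam n * Nmat F n) + lam⁻¹ • (Nmat F n * Hmat lam n)
        + (Nmat F n * Hmat lam n) * Nmat F n) := by
    rw [add_mul, add_mul, mul_add, mul_add]
    simp only [smul_mul_assoc, mul_smul_comm, one_mul, mul_one, smul_smul,
      mul_inv_cancel₀ hl, inv_mul_cancel₀ hl, one_smul]
    abel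
  rw [expand, h0, add_zero]

lemma jordan_bt (lam : F) (n : ℕ) : (jordanBlock lam n).BlockTriangular id := by
  intro i j h
  have h' : (j : ℕ) < (i : ℕ) := h
  simp only [jordanBlock, Matrix.of_apply]
  rw [if_neg, if_neg]
  · omega
  · intro he; exact absurd (Fin.val_eq_of_eq he) (by omega)

lemma jordan_det (lam : F) (n : ℕ) : (jordanBlock lam n).det = lam ^ n := by
  rw [Matrix.det_of_upperTriangular (jordan_bt lam n)]
  simp [jordanBlock]

lemma Hmat_bt (lam : F) (n : ℕ) : (Hmat lam n).BlockTriangular id := by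
  intro i j h
  have h' : (j : ℕ) < (i : ℕ) := h
  simp [Hmat, Hf, Nat.choose_eq_zero_of_lt h']

lemma Hmat_isUnit (lam : F) (hl : lam ≠ 0) (n : ℕ) : IsUnit (Hmat lam n) := by
  rw [Matrix.isUnit_iff_isUnit_det, Matrix.det_of_upperTriangular (Hmat_bt lam n)]
  rw [isUnit_iff_ne_zero]
  apply Finset.prod_ne_zero_iff.2
  intro i _
  have hd : Hmat lam n i i = (-1) ^ (i : ℕ) * lam ^ ((i : ℕ) + (i : ℕ)) * 1 := by
    simp [Hmat, Hf]
  rw [hd]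
  exact mul_ne_zero (mul_ne_zero (pow_ne_zero _ (neg_ne_zero.2 one_ne_zero))
    (pow_ne_zero _ hl)) one_ne_zero

/-- Main construction over a field: `J(λ,n) ⊕ J(λ⁻¹,n)` is strongly reversible. -/
lemma field_case (lam : F) (hl : lam ≠ 0) (n : ℕ) :
    StronglyReversible (fromBlocks (jordanBlock lam n) 0 0 (jordanBlock lam⁻¹ n)) := by
  have hl' : lam⁻¹ ≠ 0 := inv_ne_zero hl
  set J := jordanBlock lam n with hJdef
  set J' := jordanBlock lam⁻¹ n with hJ'def
  have hA : IsUnit (fromBlocks J 0 0 J' : Matrix (Fin n ⊕ Fin n) (Fin n ⊕ Fin n) F) := by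
    rw [Matrix.isUnit_iff_isUnit_det, Matrix.det_fromBlocks_zero₂₁, jordan_det, jordan_det]
    exact (isUnit_iff_ne_zero.2 (pow_ne_zero _ hl)).mul (isUnit_iff_ne_zero.2 (pow_ne_zero _ hl'))
  have hH := Hmat_isUnit lam hl n
  set H := Hmat lam n with hHdef
  set Hi := (↑hH.unit⁻¹ : Matrix (Fin n) (Fin n) F) with hHidef
  have h1 : H * Hi = 1 := by simpa only [hH.unit_spec] using hH.unit.mul_inv
  have h2 : Hi * H = 1 := by simpa only [hH.unit_spec] using hH.unit.inv_mul
  have hK : J * H * J' = H := key lam hl n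
  set gm : Matrix (Fin n ⊕ Fin n) (Fin n ⊕ Fin n) F := fromBlocks 0 H Hi 0 with hgm
  have hg2 : gm * gm = 1 := by
    rw [hgm, fromBlocks_multiply, ← fromBlocks_one]
    simp [h1, h2]
  have e2 : Hi * J * H * J' = 1 := by
    rw [mul_assoc Hi J H, mul_assoc Hi (J * H) J', hK, h2]
  have e1 : H * J' * Hi * J = 1 := by
    refine mul_eq_one_comm.mp (show J * (H * J' * Hi) = 1 from ?_)
    rw [← mul_assoc, ← mul_assoc, hK, h1]
  have hmain : gm * fromBlocks J 0 0 J' * gm * fromBlocks J 0 0 J' = 1 := by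
    rw [hgm, ← fromBlocks_one]
    simp only [fromBlocks_multiply, Matrix.zero_mul, Matrix.mul_zero, add_zero, zero_add,
      zero_mul, mul_zero]
    rw [e1, e2]
  refine ⟨hA.unit, hA.unit_spec, ⟨gm, gm, hg2, hg2⟩, Units.ext (by simpa using hg2), ?_⟩
  apply eq_inv_of_mul_eq_one_left
  apply Units.ext
  show gm * (↑hA.unit : Matrix (Fin n ⊕ Fin n) (Fin n ⊕ Fin n) F) * gm *
    (↑hA.unit : Matrix (Fin n ⊕ Fin n) (Fin n ⊕ Fin n) F) = 1
  rw [hA.unit_spec]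
  exact hmain

end Aux

section Transfer

/-- `toQuat` as a ring homomorphism. -/
def toQuatHom : ℂ →+* Quaternion ℝ where
  toFun := toQuat
  map_one' := by simp [toQuat]; rfl
  map_mul' z w := by
    show toQuat (z * w) = toQuat z * toQuat w
    ext <;> simp only [Quaternion.re_mul, Quaternion.imI_mul, Quaternion.imJ_mul,
      Quaternion.imK_mul] <;> simp [toQuat, Complex.mul_re, Complex.mul_im] <;> try ring
  map_zero' := by simp [toQuat]; rfl
  map_add' z w := by
    show toQuat (z + w) = toQuat z + toQuat w
    ext <;> simp only [Quaternion.re_add, Quaternion.imI_add, Quaternion.imJ_add,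
      Quaternion.imK_add] <;> simp [toQuat]

lemma map_stronglyReversible {R S : Type*} [Ring R] [Ring S] (φ : R →+* S)
    {ι : Type*} [Fintype ι] [DecidableEq ι] {A : Matrix ι ι R}
    (h : StronglyReversible A) : StronglyReversible (A.map φ) := by
  obtain ⟨a, ha, g, hg2, hgg⟩ := h
  let Φ : Matrix ι ι R →+* Matrix ι ι S := φ.mapMatrix
  refine ⟨Units.map Φ.toMonoidHom a, ?_, Units.map Φ.toMonoidHom g, ?_, ?_⟩
  · simp [Φ, ha]
  · rw [← _root_.map_mul, hg2, _root_.map_one]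
  · rw [← _root_.map_mul, ← map_inv, ← _root_.map_mul, hgg, map_inv]

lemma jordanBlock_map {R S : Type*} [Ring R] [Ring S] (φ : R →+* S) (lam : R) (m : ℕ) :
    (jordanBlock lam m).map φ = jordanBlock (φ lam) m := by
  ext i j
  simp only [jordanBlock, Matrix.map_apply, Matrix.of_apply]
  split_ifs <;> simp

end Transfer

/-- For `n ≥ 1`, the block-diagonal matrix `A = J(λ,n) ⊕ J(λ⁻¹,n)` is strongly
reversible in `GL(2n,D)`, where `D = ℝ` or `ℂ` and `λ ∈ D \ {0,1,-1}`, or `D = ℍ` and `λ` is a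
nonzero complex number with nonnegative imaginary part and `|λ| ≠ 1`, viewed as a quaternion. -/
theorem stmt6 (n : ℕ) (hn : 1 ≤ n) :
    (∀ lam : ℝ, lam ≠ 0 → lam ≠ 1 → lam ≠ -1 →
      StronglyReversible (fromBlocks (jordanBlock lam n) 0 0 (jordanBlock lam⁻¹ n))) ∧
    (∀ lam : ℂ, lam ≠ 0 → lam ≠ 1 → lam ≠ -1 →
      StronglyReversible (fromBlocks (jordanBlock lam n) 0 0 (jordanBlock lam⁻¹ n))) ∧
    (∀ lam : ℂ, lam ≠ 0 → 0 ≤ lam.im → ‖lam‖ ≠ 1 →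
      StronglyReversible
        (fromBlocks (jordanBlock (toQuat lam) n) 0 0 (jordanBlock (toQuat lam⁻¹) n))) := by
  refine ⟨fun lam hl _ _ => field_case lam hl n, fun lam hl _ _ => field_case lam hl n,
    fun lam hl _ _ => ?_⟩
  have h := map_stronglyReversible toQuatHom (field_case lam hl n)
  have hz : (0 : Matrix (Fin n) (Fin n) ℂ).map ⇑toQuatHom = 0 := Matrix.map_zero _ (map_zero _)
  rw [Matrix.fromBlocks_map, jordanBlock_map, jordanBlock_map, hz] at h
  exact h
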